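/- A decorated graph (Ω, f, g, λ) is Rado up to scaling if and only if it is weakly Rado. -/

import Mathlib

/-!
Statement 6: A decorated graph `(Ω, f, g, λ)` (for an odd prime `ℓ`, relative to a
fixed isomorphism `log_ℓ : 1 + ℓℤ_ℓ → ℤ_ℓ`) is Rado up to scaling if and only if it
is weakly Rado.

Residues mod `ℓ^n` are encoded as natural numbers `< ℓ^n`; an element of
`(ℤ/ℓ^n)^×` is a natural number `< ℓ^n` not divisible by `ℓ`.  The isomorphism
`log_ℓ` is encoded by the function `lg : ℤ_ℓ → ℤ_ℓ`, `lg x = log_ℓ (1 + ℓx)`.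
-/

noncomputable section

open scoped Classical ENat

/-- `lg` encodes a (topological) group isomorphism `log_ℓ : 1 + ℓℤ_ℓ ≃ ℤ_ℓ`
via `lg x = log_ℓ (1 + ℓ x)` (note `(1+ℓx)(1+ℓy) = 1 + ℓ(x + y + ℓxy)`). -/
structure IsLogIso (ℓ : ℕ) [Fact ℓ.Prime] (lg : ℤ_[ℓ] → ℤ_[ℓ]) : Prop where
  bijective : Function.Bijective lg
  map_mul : ∀ x y : ℤ_[ℓ], lg (x + y + (ℓ : ℤ_[ℓ]) * x * y) = lg x + lg y
  continuous : Continuous lg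

/-- The value of `log_ℓ (1 + a·ℓ^n) mod ℓ^n`, as a natural number `< ℓ^n`
(for `n ≥ 1`). -/
def logVal (ℓ : ℕ) [Fact ℓ.Prime] (lg : ℤ_[ℓ] → ℤ_[ℓ]) (n : ℕ) (a : ℤ_[ℓ]) : ℕ :=
  (PadicInt.toZModPow n (lg (a * (ℓ : ℤ_[ℓ]) ^ (n - 1)))).val

/-- The raw data of a decorated graph: a vertex set `Ω`, the function
`f : Ω → ℤ_{≥1} ∪ {∞}`, the two distinguished vertices `v1 = v_ℓ(1)`,
`v2 = v_ℓ(2)`, the decoration `g` and the labeling `lab`. -/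
structure GraphData where
  Ω : Type
  f : Ω → ℕ∞
  v1 : Ω
  v2 : Ω
  g : Ω → ℕ
  lab : Ω → Ω → ℕ

namespace GraphData

variable (D : GraphData)

/-- `f(v,w) = min (f v) (f w)`, as a natural number (it is finite on all pairs
carrying a label). -/
def fm (v w : D.Ω) : ℕ := (min (D.f v) (D.f w)).toNat

/-- The pairs `(v,w)` carrying a label: distinct, not both in the fiber over `∞`. -/
def Rel (v w : D.Ω) : Prop := v ≠ w ∧ ¬ (D.f v = ⊤ ∧ D.f w = ⊤)

/-- `D` is a decorated graph for the odd prime `ℓ` and the logarithm `lg`. -/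
def IsDecorated (ℓ : ℕ) [Fact ℓ.Prime] (lg : ℤ_[ℓ] → ℤ_[ℓ]) : Prop :=
  Countable D.Ω ∧ Infinite D.Ω ∧
  (∀ v, 1 ≤ D.f v) ∧
  D.v1 ≠ D.v2 ∧ D.f D.v1 = ⊤ ∧ D.f D.v2 = ⊤ ∧
  (∀ v, D.f v = ⊤ → v = D.v1 ∨ v = D.v2) ∧
  (∀ v, D.f v ≠ ⊤ → D.g v < ℓ ^ (D.f v).toNat ∧ ¬ ℓ ∣ D.g v) ∧
  (∀ v w, D.Rel v w → D.lab v w < ℓ ^ D.fm v w) ∧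
  (∀ w, D.f w ≠ ⊤ → D.lab D.v1 w = logVal ℓ lg (D.f w).toNat (D.g w : ℤ_[ℓ])) ∧
  (∀ w, D.f w ≠ ⊤ → D.lab w D.v1 = 0 ∧ D.lab w D.v2 = 0)

/-- `D` is Rado. -/
def IsRado (ℓ : ℕ) [Fact ℓ.Prime] (lg : ℤ_[ℓ] → ℤ_[ℓ]) : Prop :=
  ∀ S : Finset D.Ω, D.v1 ∈ S → D.v2 ∈ S →
  ∀ n : ℕ, 1 ≤ n →
  ∀ α : ℕ, α < ℓ ^ n → ¬ ℓ ∣ α →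
  ∀ μ₁ μ₂ : D.Ω → ℕ,
    (∀ s ∈ S, μ₁ s < ℓ ^ (min (n : ℕ∞) (D.f s)).toNat) →
    (∀ s ∈ S, μ₂ s < ℓ ^ (min (n : ℕ∞) (D.f s)).toNat) →
    μ₂ D.v1 = logVal ℓ lg n (α : ℤ_[ℓ]) →
    μ₁ D.v1 = 0 → μ₁ D.v2 = 0 →
    ∃ v : D.Ω, v ∉ S ∧ D.f v = (n : ℕ∞) ∧ D.g v = α ∧
      ∀ s ∈ S, D.lab v s = μ₁ s ∧ D.lab s v = μ₂ s

/-- `D` is weakly Rado. -/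
def IsWeaklyRado (ℓ : ℕ) [Fact ℓ.Prime] (lg : ℤ_[ℓ] → ℤ_[ℓ]) : Prop :=
  ∀ S : Finset D.Ω, D.v1 ∈ S → D.v2 ∈ S →
  ∀ n : ℕ, 1 ≤ n →
  ∀ α : ℕ, α < ℓ ^ n → ¬ ℓ ∣ α →
  ∀ μ₁ μ₂ : D.Ω → ℕ,
    (∀ s ∈ S, μ₁ s < ℓ ^ (min (n : ℕ∞) (D.f s)).toNat) →
    (∀ s ∈ S, μ₂ s < ℓ ^ (min (n : ℕ∞) (D.f s)).toNat) →
    μ₂ D.v1 = logVal ℓ lg n (α : ℤ_[ℓ]) →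
    μ₁ D.v1 = 0 → μ₁ D.v2 = 0 →
    ∃ v : D.Ω, v ∉ S ∧ ∃ γ : ℕ, γ < ℓ ^ n ∧ ¬ ℓ ∣ γ ∧
      D.f v = (n : ℕ∞) ∧ D.g v = α ∧
      ∀ s ∈ S, D.lab v s = (γ * μ₁ s) % ℓ ^ (min (n : ℕ∞) (D.f s)).toNat ∧
        D.lab s v = μ₂ s

/-- The scaling `γ_• · λ` of the labeling of `D`. -/
def scale (ℓ : ℕ) (γ : D.Ω → ℕ) : GraphData where
  Ω := D.Ω
  f := D.f
  v1 := D.v1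
  v2 := D.v2
  g := D.g
  lab := fun v w => if D.f v = ⊤ then D.lab v w else (γ v * D.lab v w) % ℓ ^ D.fm v w

/-- `D` is Rado up to scaling: some scaling `γ_• · λ` of its labeling by units
`γ_v ∈ (ℤ/ℓ^{f v})^×` is Rado. -/
def IsRadoUpToScaling (ℓ : ℕ) [Fact ℓ.Prime] (lg : ℤ_[ℓ] → ℤ_[ℓ]) : Prop :=
  ∃ γ : D.Ω → ℕ, (∀ v, D.f v ≠ ⊤ → γ v < ℓ ^ (D.f v).toNat ∧ ¬ ℓ ∣ γ v) ∧
    (D.scale ℓ γ).IsRado ℓ lg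

end GraphData


namespace Stmt6Aux

open GraphData

/-! ### Elementary modular arithmetic lemmas -/

lemma modeq_key {M N a b x : ℕ} (hMN : M ∣ N) (hab : a * b ≡ 1 [MOD N]) (hx : x < M) :
    (a * ((b * x) % M)) % M = x := by
  have h1 : a * ((b * x) % M) ≡ a * b * x [MOD M] := by
    calc a * ((b * x) % M) ≡ a * (b * x) [MOD M] :=
          Nat.ModEq.mul_left a (Nat.mod_modEq _ M)
      _ = a * b * x := by ring
  have h3 : a * b * x ≡ x [MOD M] := by
    have := (hab.of_dvd hMN).mul_right x
    simpa using this
  have h := h1.trans h3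
  rw [Nat.ModEq] at h
  rwa [Nat.mod_eq_of_lt hx] at h

lemma cancel_eq {M c a b : ℕ} (hc : Nat.Coprime c M) (hab : (c * a) % M = (c * b) % M)
    (ha : a < M) (hb : b < M) : a = b := by
  have h : a ≡ b [MOD M] :=
    Nat.ModEq.cancel_left_of_coprime (hc.symm : Nat.gcd M c = 1) (hab : c * a ≡ c * b [MOD M])
  rwa [Nat.ModEq, Nat.mod_eq_of_lt ha, Nat.mod_eq_of_lt hb] at h

lemma cop {ℓ a : ℕ} (hp : ℓ.Prime) (ha : ¬ ℓ ∣ a) (k : ℕ) : Nat.Coprime a (ℓ ^ k) :=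
  Nat.Coprime.pow_right k ((hp.coprime_iff_not_dvd.mpr ha).symm)

/-- A natural-number inverse modulo `M`. -/
def Ninv (M a : ℕ) : ℕ := ((a : ZMod M)⁻¹).val

lemma Ninv_lt {M : ℕ} [NeZero M] (a : ℕ) : Ninv M a < M := ZMod.val_lt _

lemma Ninv_spec {M a : ℕ} [NeZero M] (h : Nat.Coprime a M) : a * Ninv M a ≡ 1 [MOD M] := by
  have h1 : (a : ZMod M) * (a : ZMod M)⁻¹ = 1 := ZMod.coe_mul_inv_eq_one a h
  have h2 : (((((a : ZMod M)⁻¹).val : ℕ)) : ZMod M) = (a : ZMod M)⁻¹ := by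
    rw [ZMod.natCast_val, ZMod.cast_id]
  rw [← ZMod.natCast_eq_natCast_iff]
  push_cast
  rw [Ninv, h2]
  exact h1

lemma Ninv_spec' {M a : ℕ} [NeZero M] (h : Nat.Coprime a M) : Ninv M a * a ≡ 1 [MOD M] := by
  rw [mul_comm]; exact Ninv_spec h

lemma Ninv_not_dvd {ℓ n a : ℕ} (hp : ℓ.Prime) (hn : 1 ≤ n) (ha : ¬ ℓ ∣ a) :
    ¬ ℓ ∣ Ninv (ℓ ^ n) a := by
  haveI : NeZero (ℓ ^ n) := ⟨(pow_pos hp.pos n).ne'⟩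
  intro hdvd
  have hs : (a * Ninv (ℓ ^ n) a) % ℓ ^ n = 1 % ℓ ^ n := Ninv_spec (cop hp ha n)
  have hℓn : ℓ ∣ ℓ ^ n := dvd_pow_self ℓ (by omega)
  have hd1 : ℓ ∣ (a * Ninv (ℓ ^ n) a) % ℓ ^ n :=
    (Nat.dvd_mod_iff hℓn).mpr (Dvd.dvd.mul_left hdvd a)
  rw [hs, Nat.mod_eq_of_lt (Nat.one_lt_pow (by omega) hp.one_lt)] at hd1
  exact hp.ne_one (Nat.dvd_one.mp hd1)

/-! ### `ℕ∞` exponent lemmas -/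

lemma kex_le {D : GraphData} (s : D.Ω) (n : ℕ) : (min (n : ℕ∞) (D.f s)).toNat ≤ n :=
  ENat.toNat_le_of_le_coe (min_le_left _ _)

lemma kex_top {D : GraphData} {s : D.Ω} (n : ℕ) (h : D.f s = ⊤) :
    (min (n : ℕ∞) (D.f s)).toNat = n := by
  rw [h, min_eq_left le_top, ENat.toNat_coe]

lemma fm_eq {D : GraphData} {v : D.Ω} (s : D.Ω) {n : ℕ} (h : D.f v = (n : ℕ∞)) :
    D.fm v s = (min (n : ℕ∞) (D.f s)).toNat := by
  simp only [GraphData.fm, h]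

lemma fm_eq' {D : GraphData} {v : D.Ω} (s : D.Ω) {n : ℕ} (h : D.f v = (n : ℕ∞)) :
    D.fm s v = (min (n : ℕ∞) (D.f s)).toNat := by
  simp only [GraphData.fm, h, min_comm]

@[simp] lemma scale_f (D : GraphData) (ℓ : ℕ) (γ : D.Ω → ℕ) : (D.scale ℓ γ).f = D.f := rfl
@[simp] lemma scale_v1 (D : GraphData) (ℓ : ℕ) (γ : D.Ω → ℕ) : (D.scale ℓ γ).v1 = D.v1 := rfl
@[simp] lemma scale_v2 (D : GraphData) (ℓ : ℕ) (γ : D.Ω → ℕ) : (D.scale ℓ γ).v2 = D.v2 := rfl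
@[simp] lemma scale_g (D : GraphData) (ℓ : ℕ) (γ : D.Ω → ℕ) : (D.scale ℓ γ).g = D.g := rfl
lemma scale_lab (D : GraphData) (ℓ : ℕ) (γ : D.Ω → ℕ) (v w : D.Ω) :
    (D.scale ℓ γ).lab v w =
      if D.f v = ⊤ then D.lab v w else (γ v * D.lab v w) % ℓ ^ D.fm v w := rfl

/-! ### Queries and the recursive construction -/

/-- A (finitely encoded) Rado query. -/
structure Qry (D : GraphData) where
  S : Finset D.Ω
  n : ℕ
  a : ℕ
  m1 : D.Ω →₀ ℕ
  m2 : D.Ω →₀ ℕ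

instance (D : GraphData) [Countable D.Ω] : Countable (Qry D) := by
  have hinj : Function.Injective
      (fun q : Qry D => (q.S, q.n, q.a, q.m1, q.m2)) := by
    rintro ⟨⟩ ⟨⟩ h
    simpa using h
  exact hinj.countable

instance (D : GraphData) : Nonempty (Qry D) := ⟨⟨∅, 0, 0, 0, 0⟩⟩

variable (ℓ : ℕ) [Fact ℓ.Prime] (lg : ℤ_[ℓ] → ℤ_[ℓ]) (D : GraphData)

/-- Validity of a query (the hypotheses of the Rado property). -/
def Valid (q : Qry D) : Prop :=
  D.v1 ∈ q.S ∧ D.v2 ∈ q.S ∧ 1 ≤ q.n ∧ q.a < ℓ ^ q.n ∧ ¬ ℓ ∣ q.a ∧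
  (∀ s ∈ q.S, q.m1 s < ℓ ^ (min (q.n : ℕ∞) (D.f s)).toNat) ∧
  (∀ s ∈ q.S, q.m2 s < ℓ ^ (min (q.n : ℕ∞) (D.f s)).toNat) ∧
  q.m2 D.v1 = logVal ℓ lg q.n (q.a : ℤ_[ℓ]) ∧ q.m1 D.v1 = 0 ∧ q.m1 D.v2 = 0

/-- Enlarged finite set used at a stage of the construction. -/
def bigS (q : Qry D) (st : Finset D.Ω × (D.Ω → ℕ)) : Finset D.Ω :=
  q.S ∪ st.1 ∪ {D.v1, D.v2}

lemma S_subset_bigS (q : Qry D) (st : Finset D.Ω × (D.Ω → ℕ)) : q.S ⊆ bigS D q st :=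
  fun _ h => Finset.mem_union_left _ (Finset.mem_union_left _ h)

lemma fst_subset_bigS (q : Qry D) (st : Finset D.Ω × (D.Ω → ℕ)) : st.1 ⊆ bigS D q st :=
  fun _ h => Finset.mem_union_left _ (Finset.mem_union_right _ h)

lemma v1_mem_bigS (q : Qry D) (st : Finset D.Ω × (D.Ω → ℕ)) : D.v1 ∈ bigS D q st := by
  simp [bigS]

lemma v2_mem_bigS (q : Qry D) (st : Finset D.Ω × (D.Ω → ℕ)) : D.v2 ∈ bigS D q st := by
  simp [bigS]

/-- The `μ₁` of the enlarged query. -/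
def mu1 (q : Qry D) : D.Ω → ℕ := fun s => if s ∈ q.S then q.m1 s else 0

/-- The `μ₂` of the enlarged query, twisted by the inverse of the current scaling. -/
def mu2 (q : Qry D) (st : Finset D.Ω × (D.Ω → ℕ)) : D.Ω → ℕ := fun s =>
  if D.f s = ⊤ then (if s ∈ q.S then q.m2 s else 0)
  else (Ninv (ℓ ^ (min (q.n : ℕ∞) (D.f s)).toNat) (st.2 s) *
      (if s ∈ q.S then q.m2 s else 0)) % ℓ ^ (min (q.n : ℕ∞) (D.f s)).toNat

/-- The conclusion of the weak Rado property for the enlarged query. -/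
def Good (q : Qry D) (st : Finset D.Ω × (D.Ω → ℕ)) : Prop :=
  ∃ p : D.Ω × ℕ, p.1 ∉ bigS D q st ∧ p.2 < ℓ ^ q.n ∧ ¬ ℓ ∣ p.2 ∧
    D.f p.1 = (q.n : ℕ∞) ∧ D.g p.1 = q.a ∧
    ∀ s ∈ bigS D q st,
      D.lab p.1 s = (p.2 * mu1 D q s) % ℓ ^ (min (q.n : ℕ∞) (D.f s)).toNat ∧
      D.lab s p.1 = mu2 ℓ D q st s

/-- One step of the construction. -/
def step (q : Qry D) (st : Finset D.Ω × (D.Ω → ℕ)) : Finset D.Ω × (D.Ω → ℕ) :=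
  if h : Good ℓ D q st then
    (bigS D q st ∪ {h.choose.1},
      Function.update st.2 h.choose.1 (Ninv (ℓ ^ q.n) h.choose.2))
  else (bigS D q st, st.2)

/-- The chain of states. -/
def chain (e : ℕ → Qry D) : ℕ → Finset D.Ω × (D.Ω → ℕ)
  | 0 => (∅, fun _ => 1)
  | k + 1 => step ℓ D (e k) (chain e k)

lemma fst_subset_step (q : Qry D) (st : Finset D.Ω × (D.Ω → ℕ)) :
    st.1 ⊆ (step ℓ D q st).1 := by
  rw [step]
  split_ifs with h
  · exact fun x hx => Finset.mem_union_left _ (fst_subset_bigS D q st hx)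
  · exact fst_subset_bigS D q st

lemma chain_mono (e : ℕ → Qry D) {k m : ℕ} (hkm : k ≤ m) :
    (chain ℓ D e k).1 ⊆ (chain ℓ D e m).1 := by
  induction m with
  | zero => rw [Nat.le_zero.mp hkm]
  | succ m ih =>
    rcases Nat.lt_or_ge k (m + 1) with h | h
    · exact fun x hx => fst_subset_step ℓ D (e m) (chain ℓ D e m)
        (ih (Nat.lt_succ_iff.mp h) hx)
    · rw [Nat.le_antisymm hkm h]

lemma step_snd_eq (q : Qry D) (st : Finset D.Ω × (D.Ω → ℕ)) {v : D.Ω} (hv : v ∈ st.1) :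
    (step ℓ D q st).2 v = st.2 v := by
  rw [step]
  split_ifs with h
  · dsimp only
    apply Function.update_of_ne
    intro hvw
    exact h.choose_spec.1 (hvw ▸ fst_subset_bigS D q st hv)
  · rfl

lemma chain_stable (e : ℕ → Qry D) {k m : ℕ} (hkm : k ≤ m) {v : D.Ω}
    (hv : v ∈ (chain ℓ D e k).1) : (chain ℓ D e m).2 v = (chain ℓ D e k).2 v := by
  induction m with
  | zero => rw [Nat.le_zero.mp hkm]
  | succ m ih =>
    rcases Nat.lt_or_ge k (m + 1) with h | h
    · have hkm' : k ≤ m := Nat.lt_succ_iff.mp h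
      have : (chain ℓ D e (m + 1)).2 v = (chain ℓ D e m).2 v :=
        step_snd_eq ℓ D (e m) (chain ℓ D e m) (chain_mono ℓ D e hkm' hv)
      rw [this, ih hkm']
    · rw [Nat.le_antisymm hkm h]

lemma good_n_pos {q : Qry D} {st : Finset D.Ω × (D.Ω → ℕ)}
    (h : Good ℓ D q st) : 1 ≤ q.n := by
  obtain ⟨p, -, hlt, hnd, -⟩ := h
  rcases Nat.eq_zero_or_pos q.n with h0 | h1
  · exfalso
    rw [h0, pow_zero, Nat.lt_one_iff] at hlt
    exact hnd (hlt ▸ dvd_zero ℓ)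
  · exact h1

lemma toNat_f_pos (hf1 : ∀ v, 1 ≤ D.f v) {v : D.Ω} (hv : D.f v ≠ ⊤) :
    (D.f v).toNat ≠ 0 := by
  intro h0
  rcases ENat.toNat_eq_zero.mp h0 with h | h
  · have := hf1 v
    rw [h] at this
    exact absurd this (by norm_num)
  · exact hv h

lemma chain_unit (hf1 : ∀ v, 1 ≤ D.f v) (e : ℕ → Qry D) (k : ℕ) :
    ∀ v, D.f v ≠ ⊤ → (chain ℓ D e k).2 v < ℓ ^ (D.f v).toNat ∧ ¬ ℓ ∣ (chain ℓ D e k).2 v := by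
  have hp : ℓ.Prime := Fact.out
  induction k with
  | zero =>
    intro v hv
    exact ⟨Nat.one_lt_pow (toNat_f_pos D hf1 hv) hp.one_lt, hp.not_dvd_one⟩
  | succ k ih =>
    intro v hv
    have hs2 : (chain ℓ D e (k + 1)).2 = (step ℓ D (e k) (chain ℓ D e k)).2 := rfl
    rw [hs2, step]
    split_ifs with h
    · have hps := h.choose_spec
      dsimp only
      by_cases hvp : v = h.choose.1
      · have hfv : D.f v = ((e k).n : ℕ∞) := by rw [hvp]; exact hps.2.2.2.1
        have hn1 : 1 ≤ (e k).n := good_n_pos ℓ D h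
        haveI : NeZero (ℓ ^ (e k).n) := ⟨(pow_pos hp.pos _).ne'⟩
        rw [hvp, Function.update_self, hps.2.2.2.1, ENat.toNat_coe]
        exact ⟨Ninv_lt _, Ninv_not_dvd hp hn1 hps.2.2.1⟩
      · rw [Function.update_of_ne hvp]
        exact ih v hv
    · exact ih v hv

lemma chain_good (hwR : D.IsWeaklyRado ℓ lg) (hfv1 : D.f D.v1 = ⊤)
    (e : ℕ → Qry D) (k : ℕ) (hval : Valid ℓ lg D (e k)) :
    Good ℓ D (e k) (chain ℓ D e k) := by
  have hp : ℓ.Prime := Fact.out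
  obtain ⟨h1, h2, h3, h4, h5, h6, h7, h8, h9, h10⟩ := hval
  set q := e k with hq
  set st := chain ℓ D e k with hst
  obtain ⟨v, hvS, γ, hγ1, hγ2, hfv, hgv, hlab⟩ :=
    hwR (bigS D q st) (v1_mem_bigS D q st) (v2_mem_bigS D q st)
      q.n h3 q.a h4 h5 (mu1 D q) (mu2 ℓ D q st)
      (by
        intro s _
        rw [mu1]
        split_ifs with hs
        · exact h6 s hs
        · exact pow_pos hp.pos _)
      (by
        intro s _
        rw [mu2]
        split_ifs with hft hs
        · exact h7 s hs
        · exact pow_pos hp.pos _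
        · exact Nat.mod_lt _ (pow_pos hp.pos _)
        · exact Nat.mod_lt _ (pow_pos hp.pos _))
      (by
        rw [mu2, if_pos hfv1, if_pos h1]
        exact h8)
      (by rw [mu1, if_pos h1]; exact h9)
      (by rw [mu1, if_pos h2]; exact h10)
  exact ⟨(v, γ), hvS, hγ1, hγ2, hfv, hgv, hlab⟩

end Stmt6Aux

open Stmt6Aux in
theorem weak_to_scaling_aux (ℓ : ℕ) [Fact ℓ.Prime]
    (lg : ℤ_[ℓ] → ℤ_[ℓ])
    (D : GraphData) (hD : D.IsDecorated ℓ lg) (hwR : D.IsWeaklyRado ℓ lg) :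
    D.IsRadoUpToScaling ℓ lg := by
  obtain ⟨hcnt, hinf, hf1, hne, hfv1, hfv2, hfib, hgv, hlabB, hlabL, hlab0⟩ := hD
  haveI := hcnt
  have hp : ℓ.Prime := Fact.out
  obtain ⟨e, he⟩ := exists_surjective_nat (Qry D)
  set C : ℕ → Finset D.Ω × (D.Ω → ℕ) := chain ℓ D e with hC
  set γf : D.Ω → ℕ :=
    fun v => if h : ∃ k, v ∈ (C k).1 then (C (Nat.find h)).2 v else 1 with hγfdef
  have hγf : ∀ k v, v ∈ (C k).1 → γf v = (C k).2 v := by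
    intro k v hv
    have hex : ∃ j, v ∈ (C j).1 := ⟨k, hv⟩
    rw [hγfdef]
    simp only [dif_pos hex]
    exact (chain_stable ℓ D e (Nat.find_le hv) (Nat.find_spec hex)).symm
  have hγunit : ∀ v, D.f v ≠ ⊤ → γf v < ℓ ^ (D.f v).toNat ∧ ¬ ℓ ∣ γf v := by
    intro v hv
    rw [hγfdef]
    by_cases hex : ∃ k, v ∈ (C k).1
    · simp only [dif_pos hex]
      exact chain_unit ℓ D hf1 e (Nat.find hex) v hv
    · simp only [dif_neg hex]
      exact ⟨Nat.one_lt_pow (toNat_f_pos D hf1 hv) hp.one_lt, hp.not_dvd_one⟩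
  refine ⟨γf, hγunit, ?_⟩
  intro S hv1 hv2 n hn α hα hαd μ₁ μ₂ hb1 hb2 hm2v1 hm1v1 hm1v2
  -- encode the query
  set m1 : D.Ω →₀ ℕ := Finsupp.onFinset S (fun a => if a ∈ S then μ₁ a else 0)
    (by intro a ha; by_contra h; exact ha (if_neg h)) with hm1def
  set m2 : D.Ω →₀ ℕ := Finsupp.onFinset S (fun a => if a ∈ S then μ₂ a else 0)
    (by intro a ha; by_contra h; exact ha (if_neg h)) with hm2def
  set q : Qry D := ⟨S, n, α, m1, m2⟩ with hqdef
  have hq1 : ∀ s ∈ S, m1 s = μ₁ s := by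
    intro s hs; rw [hm1def]; exact if_pos hs
  have hq2 : ∀ s ∈ S, m2 s = μ₂ s := by
    intro s hs; rw [hm2def]; exact if_pos hs
  have hval : Valid ℓ lg D q := by
    refine ⟨hv1, hv2, hn, hα, hαd, ?_, ?_, ?_, ?_, ?_⟩
    · intro s hs; rw [hq1 s hs]; exact hb1 s hs
    · intro s hs; rw [hq2 s hs]; exact hb2 s hs
    · rw [hq2 D.v1 hv1]; exact hm2v1
    · rw [hq1 D.v1 hv1]; exact hm1v1
    · rw [hq1 D.v2 hv2]; exact hm1v2
  obtain ⟨k, hk⟩ := he q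
  have hgood : Good ℓ D q (C k) := by
    rw [← hk]
    exact chain_good ℓ lg D hwR hfv1 e k (by rw [hk]; exact hval)
  set st := C k with hstdef
  obtain ⟨w, γ₀, hstep, hwS, hγ₀lt, hγ₀d, hfw, hgw, hlabw⟩ :
      ∃ w γ₀, C (k + 1) = (bigS D q st ∪ {w},
          Function.update st.2 w (Ninv (ℓ ^ q.n) γ₀)) ∧
        w ∉ bigS D q st ∧ γ₀ < ℓ ^ q.n ∧ ¬ ℓ ∣ γ₀ ∧ D.f w = (q.n : ℕ∞) ∧ D.g w = q.a ∧
        ∀ s ∈ bigS D q st,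
          D.lab w s = (γ₀ * mu1 D q s) % ℓ ^ (min (q.n : ℕ∞) (D.f s)).toNat ∧
          D.lab s w = mu2 ℓ D q st s := by
    obtain ⟨h1', h2', h3', h4', h5', h6'⟩ := hgood.choose_spec
    refine ⟨hgood.choose.1, hgood.choose.2, ?_, h1', h2', h3', h4', h5', h6'⟩
    show step ℓ D (e k) (C k) = _
    rw [hk, step, dif_pos hgood]
  haveI : NeZero (ℓ ^ n) := ⟨(pow_pos hp.pos _).ne'⟩
  have hwmem : w ∈ (C (k + 1)).1 := by
    rw [hstep]; exact Finset.mem_union_right _ (Finset.mem_singleton_self w)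
  have hγfw : γf w = Ninv (ℓ ^ n) γ₀ := by
    rw [hγf (k + 1) w hwmem, hstep]
    dsimp only
    exact Function.update_self _ _ _
  have hfwne : D.f w ≠ ⊤ := by rw [hfw]; exact ENat.coe_ne_top q.n
  have hfw' : D.f w = (n : ℕ∞) := hfw
  refine ⟨w, fun hws => hwS (S_subset_bigS D q st hws), hfw, hgw, ?_⟩
  intro s hs
  have hsbig : s ∈ bigS D q st := S_subset_bigS D q st hs
  have hsw : s ≠ w := fun h => hwS (h ▸ hsbig)
  obtain ⟨hl1, hl2⟩ := hlabw s hsbig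
  constructor
  · -- outgoing label
    rw [scale_lab D ℓ γf w s, if_neg hfwne, fm_eq (D := D) s hfw']
    have hmu1 : mu1 D q s = μ₁ s := by delta mu1; beta_reduce; exact (if_pos (show s ∈ q.S from hs)).trans (hq1 s hs)
    rw [hl1, hmu1]
    rw [hγfw]
    exact modeq_key (pow_dvd_pow ℓ (kex_le s n)) (Ninv_spec' (cop hp hγ₀d n)) (hb1 s hs)
  · -- incoming label
    rw [scale_lab D ℓ γf s w]
    by_cases hfs : D.f s = ⊤
    · rw [if_pos hfs, hl2]; delta mu2; beta_reduce; refine (if_pos hfs).trans ((if_pos (show s ∈ q.S from hs)).trans ?_)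
      exact hq2 s hs
    · rw [if_neg hfs, hl2, fm_eq' (D := D) s hfw']
      have hsC1 : s ∈ (C (k + 1)).1 := by
        rw [hstep]; exact Finset.mem_union_left _ hsbig
      have hγfs : γf s = st.2 s := by
        rw [hγf (k + 1) s hsC1, hstep]
        exact Function.update_of_ne hsw _ _
      have hcops : ¬ ℓ ∣ st.2 s := (chain_unit ℓ D hf1 e k s hfs).2
      haveI : NeZero (ℓ ^ (min (n : ℕ∞) (D.f s)).toNat) := ⟨(pow_pos hp.pos _).ne'⟩
      rw [hγfs]; delta mu2; beta_reduce; rw [if_neg hfs]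
      have hif : @ite ℕ (s ∈ q.S) (Finset.decidableMem s q.S) (q.m2 s) 0 = μ₂ s := (if_pos (show s ∈ q.S from hs)).trans (hq2 s hs)
      refine (congrArg (fun x => st.2 s * ((Ninv (ℓ ^ (min (q.n : ℕ∞) (D.f s)).toNat) (st.2 s) * x) %
        ℓ ^ (min (q.n : ℕ∞) (D.f s)).toNat) % ℓ ^ (min (n : ℕ∞) (D.f s)).toNat) hif).trans ?_
      exact modeq_key (dvd_refl _)
        (Ninv_spec (cop hp hcops (min (n : ℕ∞) (D.f s)).toNat)) (hb2 s hs)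

open Stmt6Aux in
theorem scaling_to_weak_aux (ℓ : ℕ) [Fact ℓ.Prime]
    (lg : ℤ_[ℓ] → ℤ_[ℓ])
    (D : GraphData) (hD : D.IsDecorated ℓ lg) (hR : D.IsRadoUpToScaling ℓ lg) :
    D.IsWeaklyRado ℓ lg := by
  obtain ⟨hcnt, hinf, hf1, hne, hfv1, hfv2, hfib, hgv, hlabB, hlabL, hlab0⟩ := hD
  obtain ⟨γ, hγu, hRado⟩ := hR
  have hp : ℓ.Prime := Fact.out
  intro S hv1 hv2 n hn α hα hαd μ₁ μ₂ hb1 hb2 hm2v1 hm1v1 hm1v2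
  haveI : NeZero (ℓ ^ n) := ⟨(pow_pos hp.pos _).ne'⟩
  set μ₂' : D.Ω → ℕ := fun s =>
    if D.f s = ⊤ then μ₂ s
    else (γ s * μ₂ s) % ℓ ^ (min (n : ℕ∞) (D.f s)).toNat with hμ₂'def
  obtain ⟨v, hvS, hfv, hgvα, hlab⟩ :=
    hRado S hv1 hv2 n hn α hα hαd μ₁ μ₂'
      hb1
      (by
        intro s hs
        show (if D.f s = ⊤ then μ₂ s
          else (γ s * μ₂ s) % ℓ ^ (min (n : ℕ∞) (D.f s)).toNat) < _
        split_ifs with hft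
        · exact hb2 s hs
        · exact Nat.mod_lt _ (pow_pos hp.pos _))
      (by
        show (if D.f D.v1 = ⊤ then μ₂ D.v1
          else (γ D.v1 * μ₂ D.v1) % ℓ ^ (min (n : ℕ∞) (D.f D.v1)).toNat) = _
        rw [if_pos hfv1]; exact hm2v1)
      hm1v1 hm1v2
  have hfv' : D.f v = (n : ℕ∞) := hfv
  have hfvne : D.f v ≠ ⊤ := by rw [hfv']; exact ENat.coe_ne_top n
  have hγv := hγu v hfvne
  have hvs_ne : ∀ s ∈ S, v ≠ s := fun s hs h => hvS (h ▸ hs)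
  refine ⟨v, hvS, Ninv (ℓ ^ n) (γ v), Ninv_lt _, Ninv_not_dvd hp hn hγv.2, hfv, hgvα, ?_⟩
  intro s hs
  obtain ⟨hl1, hl2⟩ := hlab s hs
  constructor
  · -- outgoing
    rw [scale_lab D ℓ γ v s, if_neg hfvne, fm_eq (D := D) s hfv'] at hl1
    have hbound : D.lab v s < ℓ ^ (min (n : ℕ∞) (D.f s)).toNat := by
      rw [← fm_eq (D := D) s hfv']
      exact hlabB v s ⟨hvs_ne s hs, fun h => hfvne h.1⟩
    rw [← hl1]
    exact (modeq_key (pow_dvd_pow ℓ (kex_le s n)) (Ninv_spec' (cop hp hγv.2 n)) hbound).symm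
  · -- incoming
    by_cases hfs : D.f s = ⊤
    · rw [scale_lab D ℓ γ s v, if_pos hfs] at hl2
      rw [hl2]
      show (if D.f s = ⊤ then μ₂ s
        else (γ s * μ₂ s) % ℓ ^ (min (n : ℕ∞) (D.f s)).toNat) = _
      rw [if_pos hfs]
    · rw [scale_lab D ℓ γ s v, if_neg hfs, fm_eq' (D := D) s hfv'] at hl2
      have hμ₂'s : μ₂' s = (γ s * μ₂ s) % ℓ ^ (min (n : ℕ∞) (D.f s)).toNat := by
        show (if D.f s = ⊤ then μ₂ s
          else (γ s * μ₂ s) % ℓ ^ (min (n : ℕ∞) (D.f s)).toNat) = _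
        rw [if_neg hfs]
      rw [hμ₂'s] at hl2
      have hbound : D.lab s v < ℓ ^ (min (n : ℕ∞) (D.f s)).toNat := by
        rw [← fm_eq' s hfv]
        exact hlabB s v ⟨(hvs_ne s hs).symm, fun h => hfvne h.2⟩
      exact cancel_eq (cop hp (hγu s hfs).2 _) hl2 hbound (hb2 s hs)

theorem statement6 (ℓ : ℕ) [Fact ℓ.Prime] (hodd : Odd ℓ)
    (lg : ℤ_[ℓ] → ℤ_[ℓ]) (hlg : IsLogIso ℓ lg)
    (D : GraphData) (hD : D.IsDecorated ℓ lg) :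
    D.IsRadoUpToScaling ℓ lg ↔ D.IsWeaklyRado ℓ lg :=
  ⟨fun h => scaling_to_weak_aux ℓ lg D hD h, fun h => weak_to_scaling_aux ℓ lg D hD h⟩
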